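/- Conversely, with the notation above, if P := A (I − T₂T₂*) A* satisfies P ≽ x x*, then there exists g ∈ Ran (I − T₂T₂*)^{1/2} with A g = x and ‖g‖_{H(T₂)} ≤ 1. -/

import Mathlib

set_option maxHeartbeats 1000000


open ContinuousLinearMap
open scoped ComplexInnerProductSpace

/-- Sufficiency in the solvability criterion: if `P := A (I - T₂ T₂*) A*` dominates
the rank-one operator `x x*`, then there exists `g` in the generalized de
Branges–Rovnyak space `H(T₂) = Ran D` (with `D` the positive square root of
`I - T₂ T₂*`) with `A g = x` and lifted norm at most `1`, i.e. `g = D g'` with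
`‖g'‖ ≤ 1` and `A (D g') = x`. -/
theorem interpolation_sufficiency
    {H2 Ht X : Type*} [NormedAddCommGroup H2] [InnerProductSpace ℂ H2] [CompleteSpace H2]
    [NormedAddCommGroup Ht] [InnerProductSpace ℂ Ht] [CompleteSpace Ht]
    [NormedAddCommGroup X] [InnerProductSpace ℂ X] [CompleteSpace X]
    (A : H2 →L[ℂ] X) (x : X) (T2 : Ht →L[ℂ] H2) (hT2 : ‖T2‖ ≤ 1)
    (D : H2 →L[ℂ] H2) (hDpos : D.IsPositive)
    (hDsq : D ∘L D = 1 - T2 ∘L adjoint T2)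
    (hP : ((A ∘L ((1 - T2 ∘L adjoint T2) ∘L adjoint A))
      - (innerSL ℂ x).smulRight x).IsPositive) :
    ∃ g' : H2, ‖g'‖ ≤ 1 ∧ A (D g') = x := by
  classical
  have hDsa : adjoint D = D := hDpos.isSelfAdjoint.adjoint_eq
  set C : H2 →L[ℂ] X := A ∘L D with hC
  -- key inequality
  have key : ∀ y : X, ‖(⟪x, y⟫ : ℂ)‖ ≤ ‖adjoint C y‖ := by
    intro y
    have h1 := hP.2 y
    rw [ContinuousLinearMap.reApplyInnerSelf_apply] at h1
    have hCad : adjoint C y = D (adjoint A y) := by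
      rw [hC, ContinuousLinearMap.adjoint_comp, hDsa]; rfl
    have hPy : ((A ∘L ((1 - T2 ∘L adjoint T2) ∘L adjoint A)) y : X)
        = A (D (D (adjoint A y))) := by
      simp only [ContinuousLinearMap.comp_apply]
      rw [← ContinuousLinearMap.comp_apply D D, hDsq]
    have e1 : (⟪((A ∘L ((1 - T2 ∘L adjoint T2) ∘L adjoint A)) y : X), y⟫ : ℂ)
        = ((‖adjoint C y‖ ^ 2 : ℝ) : ℂ) := by
      rw [hPy, hCad]
      calc (⟪A (D (D (adjoint A y))), y⟫ : ℂ)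
          = ⟪D (D (adjoint A y)), adjoint A y⟫ :=
            (ContinuousLinearMap.adjoint_inner_right A _ _).symm
        _ = ⟪D (adjoint A y), adjoint D (adjoint A y)⟫ :=
            (ContinuousLinearMap.adjoint_inner_right D _ _).symm
        _ = ((‖D (adjoint A y)‖ ^ 2 : ℝ) : ℂ) := by
            rw [hDsa, inner_self_eq_norm_sq_to_K]; norm_cast
    have e2 : (⟪(((innerSL ℂ x).smulRight x) y : X), y⟫ : ℂ)
        = ((‖(⟪x, y⟫ : ℂ)‖ ^ 2 : ℝ) : ℂ) := by
      have h0 : (((innerSL ℂ x).smulRight x) y : X) = (⟪x, y⟫ : ℂ) • x := rfl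
      rw [h0, inner_smul_left, RCLike.conj_mul]
      norm_cast
    rw [ContinuousLinearMap.sub_apply, inner_sub_left, e1, e2] at h1
    have h2 : (0:ℝ) ≤ ‖adjoint C y‖ ^ 2 - ‖(⟪x, y⟫ : ℂ)‖ ^ 2 := by
      simpa [← Complex.ofReal_pow] using h1
    nlinarith [norm_nonneg ((adjoint C) y), norm_nonneg (⟪x, y⟫ : ℂ)]
  have hwd : ∀ y z : X, adjoint C y = adjoint C z → (⟪x, y⟫ : ℂ) = ⟪x, z⟫ := by
    intro y z h
    have h' : ‖(⟪x, y - z⟫ : ℂ)‖ ≤ ‖adjoint C (y - z)‖ := key _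
    rw [map_sub, h, sub_self, norm_zero] at h'
    have h0 : (⟪x, y - z⟫ : ℂ) = 0 := norm_le_zero_iff.mp h'
    rw [inner_sub_right, sub_eq_zero] at h0
    exact h0
  set K : Submodule ℂ H2 := LinearMap.range (adjoint C : X →ₗ[ℂ] H2) with hK
  let f : K → ℂ := fun m => ⟪x, Classical.choose m.2⟫
  have hfspec : ∀ (m : K) (y : X), adjoint C y = (m : H2) → f m = ⟪x, y⟫ := by
    intro m y hy
    exact hwd _ _ ((Classical.choose_spec m.2).trans hy.symm)
  let L0 : K →ₗ[ℂ] ℂ :=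
    { toFun := f
      map_add' := by
        rintro ⟨m, ym, hym⟩ ⟨n, yn, hyn⟩
        have h1 : f ⟨m, ym, hym⟩ = ⟪x, ym⟫ := hfspec _ _ hym
        have h2 : f ⟨n, yn, hyn⟩ = ⟪x, yn⟫ := hfspec _ _ hyn
        have h3 : f (⟨m, ym, hym⟩ + ⟨n, yn, hyn⟩) = ⟪x, ym + yn⟫ :=
          hfspec _ _ (by simp [map_add, ← hym, ← hyn])
        rw [h1, h2, h3, inner_add_right]
      map_smul' := by
        rintro c ⟨m, ym, hym⟩
        have h1 : f ⟨m, ym, hym⟩ = ⟪x, ym⟫ := hfspec _ _ hym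
        have h3 : f (c • ⟨m, ym, hym⟩) = ⟪x, c • ym⟫ :=
          hfspec _ _ (by simp [map_smul, ← hym])
        show f (c • ⟨m, ym, hym⟩) = c • f ⟨m, ym, hym⟩
        rw [h1, h3, inner_smul_right, smul_eq_mul] }
  have hL0bound : ∀ m : K, ‖L0 m‖ ≤ 1 * ‖m‖ := by
    rintro ⟨m, ym, hym⟩
    have h1 : L0 ⟨m, ym, hym⟩ = ⟪x, ym⟫ := hfspec _ _ hym
    rw [h1, one_mul]
    calc ‖(⟪x, ym⟫ : ℂ)‖ ≤ ‖adjoint C ym‖ := key ym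
      _ = ‖(⟨m, ym, hym⟩ : K)‖ := by subst hym; rfl
  let L : K →L[ℂ] ℂ := L0.mkContinuous 1 hL0bound
  obtain ⟨G, hGext, hGnorm⟩ := exists_extension_norm_eq K L
  have hGle : ‖G‖ ≤ 1 := by
    rw [hGnorm]
    simpa using L0.mkContinuous_norm_le zero_le_one hL0bound
  refine ⟨(InnerProductSpace.toDual ℂ H2).symm G, by
    rw [LinearIsometryEquiv.norm_map]; exact hGle, ?_⟩
  have hfin : C ((InnerProductSpace.toDual ℂ H2).symm G) = x := by
    apply ext_inner_right ℂ
    intro y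
    calc (⟪C ((InnerProductSpace.toDual ℂ H2).symm G), y⟫ : ℂ)
        = ⟪(InnerProductSpace.toDual ℂ H2).symm G, adjoint C y⟫ :=
          (ContinuousLinearMap.adjoint_inner_right C _ _).symm
      _ = G (adjoint C y) := InnerProductSpace.toDual_symm_apply
      _ = L ⟨adjoint C y, ⟨y, rfl⟩⟩ := hGext ⟨adjoint C y, ⟨y, rfl⟩⟩
      _ = ⟪x, y⟫ := hfspec ⟨adjoint C y, ⟨y, rfl⟩⟩ y rfl
  exact hfin
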